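/- arXiv:math/0505374 — 2 statements merged into one kernel-verified Lean document; each statement's English description precedes it below -/
import Mathlib

section
/- For all c > 0 and all v ≥ √(2c), the standard Gaussian upper tail satisfies Φ̄(v - c/v) ≤ 4 e^c · Φ̄(v). -/
open MeasureTheory Set

/-- Standard Gaussian density. -/
noncomputable def gphi (v : ℝ) : ℝ := (Real.sqrt (2 * Real.pi))⁻¹ * Real.exp (-v ^ 2 / 2)

/-- Standard Gaussian upper tail probability. -/
noncomputable def PhiBar (v : ℝ) : ℝ := ∫ x in Set.Ioi v, gphi x

/-- Standard Gaussian CDF. -/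
noncomputable def Phi (v : ℝ) : ℝ := ∫ x in Set.Iic v, gphi x

open Filter

lemma gphi_nonneg (x : ℝ) : 0 ≤ gphi x := by
  unfold gphi; positivity

lemma gphi_le (x : ℝ) : gphi x ≤ (Real.sqrt (2 * Real.pi))⁻¹ := by
  unfold gphi
  have h : Real.exp (-x ^ 2 / 2) ≤ 1 := Real.exp_le_one_iff.mpr (by nlinarith [sq_nonneg x])
  have : (0:ℝ) ≤ (Real.sqrt (2 * Real.pi))⁻¹ := by positivity
  nlinarith

lemma hasDerivAt_gphi (x : ℝ) : HasDerivAt gphi (-(x * gphi x)) x := by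
  have h1 : HasDerivAt (fun y : ℝ => -y ^ 2 / 2) (-x) x := by
    have := ((hasDerivAt_pow 2 x).neg).div_const 2
    exact this.congr_deriv (by ring)
  have h2 := (h1.exp).const_mul (Real.sqrt (2 * Real.pi))⁻¹
  exact h2.congr_deriv (by unfold gphi; ring)

lemma integrableOn_gphi (a : ℝ) : IntegrableOn gphi (Ioi a) := by
  have h : Integrable gphi := by
    have := (integrable_exp_neg_mul_sq (by norm_num : (0:ℝ) < 1/2)).const_mul
      (Real.sqrt (2 * Real.pi))⁻¹
    refine this.congr ?_
    filter_upwards with x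
    unfold gphi; ring_nf
  exact h.integrableOn

lemma tendsto_gphi : Tendsto gphi atTop (nhds 0) := by
  have h1 : Tendsto (fun x : ℝ => -x ^ 2 / 2) atTop atBot := by
    apply Tendsto.atBot_div_const (by norm_num)
    exact (tendsto_neg_atBot_iff.mpr (tendsto_pow_atTop (by norm_num)))
  have := (Real.tendsto_exp_atBot.comp h1).const_mul (Real.sqrt (2 * Real.pi))⁻¹
  rw [mul_zero] at this
  refine this.congr fun x => ?_
  unfold gphi
  simp [Function.comp]

lemma phiBar_le_gphi_div (u : ℝ) (hu : 0 < u) : PhiBar u ≤ gphi u / u := by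
  have hderiv : ∀ x ∈ Ici u, HasDerivAt (fun y => -gphi y) (x * gphi x) x := by
    intro x _
    have := (hasDerivAt_gphi x).neg
    rw [neg_neg] at this
    exact this
  have hpos : ∀ x ∈ Ioi u, 0 ≤ x * gphi x := fun x hx =>
    mul_nonneg (le_of_lt (lt_trans hu hx)) (gphi_nonneg x)
  have htend : Tendsto (fun y => -gphi y) atTop (nhds 0) := by
    simpa using tendsto_gphi.neg
  have hint : IntegrableOn (fun x => x * gphi x) (Ioi u) :=
    integrableOn_Ioi_deriv_of_nonneg' hderiv hpos htend
  have hval : ∫ x in Ioi u, x * gphi x = gphi u := by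
    have := integral_Ioi_of_hasDerivAt_of_nonneg' hderiv hpos htend
    simpa using this
  have hmono : PhiBar u ≤ ∫ x in Ioi u, u⁻¹ * (x * gphi x) := by
    refine setIntegral_mono_on (integrableOn_gphi u) (hint.const_mul _) measurableSet_Ioi ?_
    intro x hx
    have h1 : 1 ≤ u⁻¹ * x := by
      rw [inv_mul_eq_div, le_div_iff₀ hu, one_mul]
      exact le_of_lt hx.out
    calc gphi x = 1 * gphi x := by ring
      _ ≤ (u⁻¹ * x) * gphi x := by nlinarith [gphi_nonneg x]
      _ = u⁻¹ * (x * gphi x) := by ring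
  calc PhiBar u ≤ ∫ x in Ioi u, u⁻¹ * (x * gphi x) := hmono
    _ = u⁻¹ * ∫ x in Ioi u, x * gphi x := by rw [integral_const_mul]
    _ = gphi u / u := by rw [hval]; field_simp

lemma gphi_div_le_phiBar (v : ℝ) (hv : 1 ≤ v) :
    gphi v * (v / (1 + v ^ 2)) ≤ PhiBar v := by
  set g' : ℝ → ℝ := fun x => gphi x * ((x ^ 4 + 2 * x ^ 2 - 1) / (1 + x ^ 2) ^ 2) with hg'
  have hderiv : ∀ x ∈ Ici v, HasDerivAt (fun y => -(gphi y * (y / (1 + y ^ 2)))) (g' x) x := by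
    intro x _
    have hne : (1 : ℝ) + x ^ 2 ≠ 0 := by positivity
    have hd : HasDerivAt (fun y : ℝ => y / (1 + y ^ 2))
        ((1 * (1 + x ^ 2) - x * (2 * x)) / (1 + x ^ 2) ^ 2) x := by
      have := (hasDerivAt_id' x).div (((hasDerivAt_pow 2 x).const_add 1)) hne
      exact this.congr_deriv (by ring)
    have := ((hasDerivAt_gphi x).mul hd).neg
    refine this.congr_deriv ?_
    rw [hg']
    field_simp
    ring
  have hpos : ∀ x ∈ Ioi v, 0 ≤ g' x := by
    intro x hx
    have hx1 : (1:ℝ) ≤ x := le_trans hv (le_of_lt hx)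
    have : (0:ℝ) ≤ x ^ 4 + 2 * x ^ 2 - 1 := by nlinarith
    have := gphi_nonneg x
    positivity
  have htend : Tendsto (fun y => -(gphi y * (y / (1 + y ^ 2)))) atTop (nhds 0) := by
    have h0 : Tendsto (fun y => gphi y * (y / (1 + y ^ 2))) atTop (nhds 0) := by
      apply squeeze_zero' (g := gphi)
      · filter_upwards [eventually_ge_atTop (0:ℝ)] with x hx
        have : (0:ℝ) ≤ x / (1 + x ^ 2) := by positivity
        exact mul_nonneg (gphi_nonneg x) this
      · filter_upwards [eventually_ge_atTop (0:ℝ)] with x hx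
        have h1 : x / (1 + x ^ 2) ≤ 1 := by
          rw [div_le_one (by positivity)]; nlinarith
        nlinarith [gphi_nonneg x, div_nonneg hx (by positivity : (0:ℝ) ≤ 1 + x ^ 2)]
      · exact tendsto_gphi
    simpa using h0.neg
  have hint : IntegrableOn g' (Ioi v) := integrableOn_Ioi_deriv_of_nonneg' hderiv hpos htend
  have hval : ∫ x in Ioi v, g' x = gphi v * (v / (1 + v ^ 2)) := by
    have := integral_Ioi_of_hasDerivAt_of_nonneg' hderiv hpos htend
    simpa using this
  rw [← hval]
  refine setIntegral_mono_on hint (integrableOn_gphi v) measurableSet_Ioi ?_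
  intro x _
  have h1 : (x ^ 4 + 2 * x ^ 2 - 1) / (1 + x ^ 2) ^ 2 ≤ 1 := by
    rw [div_le_one (by positivity)]; nlinarith
  calc g' x ≤ gphi x * 1 := by
        rw [hg']
        exact mul_le_mul_of_nonneg_left h1 (gphi_nonneg x)
    _ = gphi x := by ring

lemma phiBar_nonneg (v : ℝ) : 0 ≤ PhiBar v :=
  setIntegral_nonneg measurableSet_Ioi fun x _ => gphi_nonneg x

lemma phiBar_zero : PhiBar 0 = 1 / 2 := by
  have h : ∫ x in Ioi (0:ℝ), Real.exp (-(1/2) * x ^ 2) = Real.sqrt (Real.pi / (1/2)) / 2 :=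
    integral_gaussian_Ioi (1/2)
  have h2 : Real.sqrt (Real.pi / (1/2)) = Real.sqrt (2 * Real.pi) := by norm_num; ring_nf
  unfold PhiBar gphi
  rw [integral_const_mul]
  have h3 : ∀ x : ℝ, Real.exp (-x ^ 2 / 2) = Real.exp (-(1/2) * x ^ 2) := by
    intro x; ring_nf
  simp_rw [h3, h, h2]
  have : Real.sqrt (2 * Real.pi) > 0 := Real.sqrt_pos.mpr (by positivity)
  field_simp

lemma phiBar_split {u v : ℝ} (h : u ≤ v) :
    PhiBar u = (∫ x in Ioc u v, gphi x) + PhiBar v := by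
  unfold PhiBar
  rw [← setIntegral_union (Ioc_disjoint_Ioi le_rfl) measurableSet_Ioi
    ((integrableOn_gphi u).mono_set Ioc_subset_Ioi_self) (integrableOn_gphi v),
    Ioc_union_Ioi_eq_Ioi h]

lemma integral_Ioc_gphi_le {u v : ℝ} (h : u ≤ v) :
    ∫ x in Ioc u v, gphi x ≤ (v - u) * (Real.sqrt (2 * Real.pi))⁻¹ := by
  have h1 : ∫ x in Ioc u v, gphi x ≤ ∫ _x in Ioc u v, (Real.sqrt (2 * Real.pi))⁻¹ := by
    refine setIntegral_mono_on ((integrableOn_gphi u).mono_set Ioc_subset_Ioi_self)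
      (integrableOn_const (by rw [Real.volume_Ioc]; exact ENNReal.ofReal_ne_top))
      measurableSet_Ioc fun x _ => gphi_le x
  calc ∫ x in Ioc u v, gphi x ≤ ∫ _x in Ioc u v, (Real.sqrt (2 * Real.pi))⁻¹ := h1
    _ = (v - u) * (Real.sqrt (2 * Real.pi))⁻¹ := by
        rw [setIntegral_const, Real.volume_real_Ioc_of_le h, smul_eq_mul]

lemma phiBar_anti {v w : ℝ} (h : v ≤ w) : PhiBar w ≤ PhiBar v := by
  rw [phiBar_split h]
  have h2 : (0:ℝ) ≤ ∫ x in Ioc v w, gphi x :=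
    setIntegral_nonneg measurableSet_Ioc fun x _ => gphi_nonneg x
  linarith

lemma sqrt_two_pi_ge : (7:ℝ)/3 ≤ Real.sqrt (2 * Real.pi) := by
  nlinarith [Real.sq_sqrt (by positivity : (0:ℝ) ≤ 2 * Real.pi),
    Real.sqrt_nonneg (2 * Real.pi), Real.pi_gt_d6]

lemma phiBar_one : 1 / 2 - (Real.sqrt (2 * Real.pi))⁻¹ ≤ PhiBar 1 := by
  have h := phiBar_split (show (0:ℝ) ≤ 1 by norm_num)
  rw [phiBar_zero] at h
  have h2 := integral_Ioc_gphi_le (show (0:ℝ) ≤ 1 by norm_num)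
  linarith

theorem stmt3 : ∀ c v : ℝ, 0 < c → Real.sqrt (2 * c) ≤ v →
    PhiBar (v - c / v) ≤ 4 * Real.exp c * PhiBar v := by
  intro c v hc hv
  have hv0 : 0 < v := lt_of_lt_of_le (Real.sqrt_pos.mpr (by linarith)) hv
  have h2c : 2 * c ≤ v ^ 2 := by
    nlinarith [Real.sq_sqrt (show (0:ℝ) ≤ 2 * c by linarith), Real.sqrt_nonneg (2 * c)]
  set t := c / v with htdef
  have htv : t * v = c := div_mul_cancel₀ c hv0.ne'
  have ht0 : 0 < t := div_pos hc hv0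
  have ht : t ≤ v / 2 := by
    rw [htdef, div_le_div_iff₀ hv0 (by norm_num)]
    nlinarith
  set u := v - t with hudef
  have hu2 : v / 2 ≤ u := by linarith
  have hu0 : 0 < u := by linarith
  have huv : u ≤ v := by linarith
  have hgu : gphi u ≤ Real.exp c * gphi v := by
    have hu2eq : u ^ 2 = v ^ 2 - 2 * c + t ^ 2 := by
      rw [hudef]; linear_combination (-2 : ℝ) * htv
    have hle : Real.exp (-u ^ 2 / 2) ≤ Real.exp c * Real.exp (-v ^ 2 / 2) := by
      rw [← Real.exp_add]
      apply Real.exp_le_exp.mpr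
      nlinarith [sq_nonneg t]
    unfold gphi
    calc (Real.sqrt (2 * Real.pi))⁻¹ * Real.exp (-u ^ 2 / 2)
        ≤ (Real.sqrt (2 * Real.pi))⁻¹ * (Real.exp c * Real.exp (-v ^ 2 / 2)) :=
          mul_le_mul_of_nonneg_left hle (by positivity)
      _ = Real.exp c * ((Real.sqrt (2 * Real.pi))⁻¹ * Real.exp (-v ^ 2 / 2)) := by ring
  have hec : (1:ℝ) ≤ Real.exp c := by
    rw [← Real.exp_zero]; exact Real.exp_le_exp.mpr (le_of_lt hc)
  rcases le_or_gt 1 v with hv1 | hv1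
  · -- large v: use the two tail bounds
    have hA := phiBar_le_gphi_div u hu0
    have hB := gphi_div_le_phiBar v hv1
    have hw : (1:ℝ) ≤ 4 * u * (v / (1 + v ^ 2)) := by
      rw [← mul_div_assoc, le_div_iff₀ (by positivity)]
      nlinarith
    have key : gphi u / u ≤ 4 * Real.exp c * (gphi v * (v / (1 + v ^ 2))) := by
      rw [div_le_iff₀ hu0]
      have hgv := gphi_nonneg v
      have hge := Real.exp_pos c
      have hvv : (0:ℝ) ≤ v / (1 + v ^ 2) := by positivity
      nlinarith [mul_nonneg hgv hvv, mul_le_mul_of_nonneg_left hw (mul_nonneg (mul_nonneg (by linarith : (0:ℝ) ≤ Real.exp c) hgv) hvv)]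
    calc PhiBar u ≤ gphi u / u := hA
      _ ≤ 4 * Real.exp c * (gphi v * (v / (1 + v ^ 2))) := key
      _ ≤ 4 * Real.exp c * PhiBar v :=
          mul_le_mul_of_nonneg_left hB (by positivity)
  · -- small v
    have hsplit := phiBar_split huv
    have hIoc := integral_Ioc_gphi_le huv
    have hvu : v - u = t := by rw [hudef]; ring
    have hr : (Real.sqrt (2 * Real.pi))⁻¹ ≤ 3 / 7 := by
      rw [show (3:ℝ)/7 = (7/3)⁻¹ by norm_num]
      exact inv_anti₀ (by norm_num) sqrt_two_pi_ge
    have h1 : PhiBar 1 ≤ PhiBar v := phiBar_anti (le_of_lt hv1)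
    have hpb1 := phiBar_one
    have ht12 : t ≤ 1 / 2 := by linarith
    have hP : PhiBar u ≤ PhiBar v + (1/2) * (Real.sqrt (2 * Real.pi))⁻¹ := by
      rw [hsplit]
      have h0 : (0:ℝ) ≤ (Real.sqrt (2 * Real.pi))⁻¹ := by positivity
      nlinarith [hIoc]
    have hfinal : (1:ℝ)/2 * (Real.sqrt (2 * Real.pi))⁻¹ ≤ 3 * PhiBar v := by
      nlinarith
    have hPv : 0 ≤ PhiBar v := phiBar_nonneg v
    calc PhiBar u ≤ PhiBar v + (1/2) * (Real.sqrt (2 * Real.pi))⁻¹ := hP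
      _ ≤ 4 * PhiBar v := by linarith
      _ ≤ 4 * Real.exp c * PhiBar v := by nlinarith
end

section
/- Fix thresholds 0 < t_k < t_ν. Define the two-sided Gaussian exceedance probability p_t(μ) = Φ̄(t - μ) + Φ(-t - μ) for μ ≥ 0, where Φ is the standard normal CDF and Φ̄ = 1 - Φ. Then μ ↦ p_t(μ) is strictly increasing on (0,∞), and the bi-threshold function g(π) = p_{t_ν}(p_{t_k}^{-1}(π)) is convex and increasing in π on the range of p_{t_k} restricted to [0,∞). -/
open MeasureTheory Set

/-- Two-sided Gaussian exceedance probability at threshold `t` and mean `μ`. -/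
noncomputable def pexc (t μ : ℝ) : ℝ := PhiBar (t - μ) + Phi (-t - μ)

lemma gphi_cont : Continuous gphi := by
  unfold gphi; fun_prop

lemma gphi_pos (v : ℝ) : 0 < gphi v := by
  unfold gphi; positivity

lemma gphi_integrable : Integrable gphi := by
  have h := (integrable_exp_neg_mul_sq (b := (2:ℝ)⁻¹) (by norm_num)).const_mul
    (Real.sqrt (2 * Real.pi))⁻¹
  refine h.congr ?_
  filter_upwards with x
  unfold gphi; ring_nf

lemma gphi_even (v : ℝ) : gphi (-v) = gphi v := by
  unfold gphi; ring_nf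


lemma hasDerivAt_Phi (v : ℝ) : HasDerivAt Phi (gphi v) v := by
  have key : Phi = fun w : ℝ => Phi 0 + ∫ x in (0:ℝ)..w, gphi x := by
    funext w
    rw [← intervalIntegral.integral_Iic_sub_Iic (gphi_integrable.integrableOn)
      (gphi_integrable.integrableOn)]
    show Phi w = Phi 0 + (Phi w - Phi 0)
    ring
  rw [key]
  exact ((intervalIntegral.integral_hasDerivAt_right
    (gphi_integrable.intervalIntegrable)
    (gphi_cont.stronglyMeasurableAtFilter _ _) gphi_cont.continuousAt).const_add _)

lemma hasDerivAt_PhiBar (v : ℝ) : HasDerivAt PhiBar (-gphi v) v := by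
  have key : PhiBar = fun w : ℝ => (∫ x, gphi x) - Phi w := by
    funext w
    have := intervalIntegral.integral_Iic_add_Ioi (μ := volume) (f := gphi) (b := w)
      gphi_integrable.integrableOn gphi_integrable.integrableOn
    show PhiBar w = (∫ x, gphi x) - Phi w
    unfold PhiBar Phi at *
    linarith
  rw [key]
  simpa using (hasDerivAt_Phi v).const_sub (∫ x, gphi x)

lemma hasDerivAt_pexc (t μ : ℝ) :
    HasDerivAt (pexc t) (gphi (t - μ) - gphi (t + μ)) μ := by
  have h1 : HasDerivAt (fun μ => PhiBar (t - μ)) (gphi (t - μ)) μ := by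
    have := (hasDerivAt_PhiBar (t - μ)).comp μ ((hasDerivAt_id μ).const_sub t)
    simpa [Function.comp_def] using this
  have h2 : HasDerivAt (fun μ => Phi (-t - μ)) (-gphi (t + μ)) μ := by
    have := (hasDerivAt_Phi (-t - μ)).comp μ ((hasDerivAt_id μ).const_sub (-t))
    have e : gphi (-t - μ) = gphi (t + μ) := by
      rw [show (-t - μ : ℝ) = -(t + μ) by ring, gphi_even]
    simpa [e, Function.comp_def] using this
  exact (h1.add h2).congr_deriv (by ring)

lemma D_pos {t μ : ℝ} (ht : 0 < t) (hμ : 0 < μ) : 0 < gphi (t - μ) - gphi (t + μ) := by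
  unfold gphi
  have h1 : (t - μ)^2 < (t + μ)^2 := by nlinarith
  have h2 : Real.exp (-(t+μ)^2/2) < Real.exp (-(t-μ)^2/2) :=
    Real.exp_lt_exp.2 (by linarith)
  have hc : (0:ℝ) < (Real.sqrt (2*Real.pi))⁻¹ := by positivity
  nlinarith [h2, hc]

lemma pexc_smono {t : ℝ} (ht : 0 < t) : StrictMonoOn (pexc t) (Ici 0) := by
  apply strictMonoOn_of_deriv_pos (convex_Ici 0)
  · exact fun μ _ => ((hasDerivAt_pexc t μ).continuousAt).continuousWithinAt
  · intro μ hμ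
    rw [interior_Ici] at hμ
    rw [(hasDerivAt_pexc t μ).deriv]
    exact D_pos ht hμ

lemma w_nonneg : ∀ s : ℝ, 0 ≤ s → 0 ≤ s * Real.cosh s - Real.sinh s := by
  intro s hs
  have hmono : MonotoneOn (fun s : ℝ => s * Real.cosh s - Real.sinh s) (Ici 0) := by
    apply monotoneOn_of_deriv_nonneg (convex_Ici 0)
    · fun_prop
    · exact fun x _ => (by fun_prop : Differentiable ℝ _).differentiableAt.differentiableWithinAt
    · intro x hx
      rw [interior_Ici] at hx
      have hd : HasDerivAt (fun s : ℝ => s * Real.cosh s - Real.sinh s)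
          (1 * Real.cosh x + x * Real.sinh x - Real.cosh x) x :=
        ((hasDerivAt_id x).mul (Real.hasDerivAt_cosh x)).sub (Real.hasDerivAt_sinh x)
      rw [hd.deriv]
      have hsx := Real.sinh_pos_iff.2 (mem_Ioi.1 hx)
      nlinarith [mul_pos (mem_Ioi.1 hx) hsx]
  have := hmono (self_mem_Ici) hs hs
  simpa using this

lemma mul_sinh_le {u v : ℝ} (h0 : 0 ≤ v) (h : v ≤ u) :
    u * Real.sinh v ≤ v * Real.sinh u := by
  rcases eq_or_lt_of_le h0 with rfl | hv
  · simp
  have hu : 0 < u := lt_of_lt_of_le hv h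
  have hmono : MonotoneOn (fun s : ℝ => Real.sinh s / s) (Ioi 0) := by
    apply monotoneOn_of_deriv_nonneg (convex_Ioi 0)
    · exact Real.continuous_sinh.continuousOn.div (continuous_id.continuousOn)
        (fun x hx => ne_of_gt hx)
    · intro x hx
      rw [interior_Ioi] at hx
      exact (((Real.hasDerivAt_sinh x).div (hasDerivAt_id x)
        (ne_of_gt hx)).differentiableAt).differentiableWithinAt
    · intro x hx
      rw [interior_Ioi] at hx
      have hd : HasDerivAt (fun s : ℝ => Real.sinh s / s)
          ((Real.cosh x * x - Real.sinh x * 1) / x ^ 2) x :=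
        (Real.hasDerivAt_sinh x).div (hasDerivAt_id x) (ne_of_gt hx)
      rw [hd.deriv]
      have h1 := w_nonneg x hx.le
      have h2 : (0:ℝ) < x^2 := pow_pos (mem_Ioi.1 hx) 2
      apply div_nonneg _ h2.le
      simp only [id_eq, mul_one]
      linarith
  have := hmono (mem_Ioi.2 hv) (mem_Ioi.2 hu) h
  rw [div_le_div_iff₀ hv hu] at this
  linarith

lemma sinh_cross {a b x y : ℝ} (hb : 0 < b) (hab : b < a) (hx : 0 < x) (hxy : x ≤ y) :
    Real.sinh (a*x) * Real.sinh (b*y) ≤ Real.sinh (a*y) * Real.sinh (b*x) := by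
  have hy : 0 < y := lt_of_lt_of_le hx hxy
  have hratio : MonotoneOn (fun t : ℝ => Real.sinh (a*t) / Real.sinh (b*t)) (Ioi 0) := by
    apply monotoneOn_of_deriv_nonneg (convex_Ioi 0)
    · apply ContinuousOn.div (by fun_prop) (by fun_prop)
      exact fun t ht => ne_of_gt (Real.sinh_pos_iff.2 (mul_pos hb ht))
    · intro t ht
      rw [interior_Ioi] at ht
      have hda : HasDerivAt (fun t => Real.sinh (a*t)) (Real.cosh (a*t) * a) t := by
        simpa [Function.comp_def] using (Real.hasDerivAt_sinh (a*t)).comp t ((hasDerivAt_id t).const_mul a)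
      have hdb : HasDerivAt (fun t => Real.sinh (b*t)) (Real.cosh (b*t) * b) t := by
        simpa [Function.comp_def] using (Real.hasDerivAt_sinh (b*t)).comp t ((hasDerivAt_id t).const_mul b)
      have hd := hda.div hdb (ne_of_gt (Real.sinh_pos_iff.2 (mul_pos hb ht)))
      exact hd.differentiableAt.differentiableWithinAt
    · intro t ht
      rw [interior_Ioi] at ht
      have hsb := Real.sinh_pos_iff.2 (mul_pos hb ht)
      have hda : HasDerivAt (fun t => Real.sinh (a*t)) (Real.cosh (a*t) * a) t := by
        simpa [Function.comp_def] using (Real.hasDerivAt_sinh (a*t)).comp t ((hasDerivAt_id t).const_mul a)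
      have hdb : HasDerivAt (fun t => Real.sinh (b*t)) (Real.cosh (b*t) * b) t := by
        simpa [Function.comp_def] using (Real.hasDerivAt_sinh (b*t)).comp t ((hasDerivAt_id t).const_mul b)
      have hd := hda.div hdb (ne_of_gt hsb)
      rw [show (fun t => Real.sinh (a * t) / Real.sinh (b * t))
        = ((fun t => Real.sinh (a * t)) / fun t => Real.sinh (b * t)) from rfl, hd.deriv]
      apply div_nonneg _ (by positivity)
      have key : (a - b) * Real.sinh ((a+b)*t) - (a+b) * Real.sinh ((a-b)*t) ≥ 0 := by
        have ht' : (0:ℝ) < t := ht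
        have h1 := mul_sinh_le (u := (a+b)*t) (v := (a-b)*t)
          (by nlinarith) (by nlinarith)
        nlinarith [h1]
      have e1 : Real.sinh ((a+b)*t) = Real.sinh (a*t) * Real.cosh (b*t)
          + Real.cosh (a*t) * Real.sinh (b*t) := by
        rw [show (a+b)*t = a*t + b*t by ring, Real.sinh_add]
      have e2 : Real.sinh ((a-b)*t) = Real.sinh (a*t) * Real.cosh (b*t)
          - Real.cosh (a*t) * Real.sinh (b*t) := by
        rw [show (a-b)*t = a*t - b*t by ring, Real.sinh_sub]
      nlinarith [key, e1, e2]
  have := hratio (mem_Ioi.2 hx) (mem_Ioi.2 hy) hxy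
  rw [div_le_div_iff₀ (Real.sinh_pos_iff.2 (mul_pos hb hx))
    (Real.sinh_pos_iff.2 (mul_pos hb hy))] at this
  linarith

lemma gphi_identity (t μ : ℝ) : gphi (t - μ) - gphi (t + μ)
    = 2 * (Real.sqrt (2*Real.pi))⁻¹ * Real.exp (-t^2/2) * Real.exp (-μ^2/2)
      * Real.sinh (t*μ) := by
  unfold gphi
  rw [Real.sinh_eq]
  rw [show -(t-μ)^2/2 = (-t^2/2) + (-μ^2/2) + t*μ by ring,
      show -(t+μ)^2/2 = (-t^2/2) + (-μ^2/2) + (-(t*μ)) by ring,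
      Real.exp_add, Real.exp_add, Real.exp_add, Real.exp_add]
  ring

lemma D_cross {tk tν x y : ℝ} (htk : 0 < tk) (hlt : tk < tν) (hx : 0 < x) (hxy : x ≤ y) :
    (gphi (tν - x) - gphi (tν + x)) * (gphi (tk - y) - gphi (tk + y))
      ≤ (gphi (tν - y) - gphi (tν + y)) * (gphi (tk - x) - gphi (tk + x)) := by
  rw [gphi_identity, gphi_identity, gphi_identity, gphi_identity]
  have h := sinh_cross htk hlt hx hxy
  have K0 : (0:ℝ) ≤ (2 * (Real.sqrt (2*Real.pi))⁻¹ * Real.exp (-tν^2/2))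
      * (2 * (Real.sqrt (2*Real.pi))⁻¹ * Real.exp (-tk^2/2))
      * (Real.exp (-x^2/2) * Real.exp (-y^2/2)) := by positivity
  nlinarith [mul_le_mul_of_nonneg_left h K0]

theorem stmt6 (tk tν : ℝ) (htk : 0 < tk) (hlt : tk < tν) :
    StrictMonoOn (pexc tk) (Set.Ioi 0) ∧
    StrictMonoOn (pexc tν) (Set.Ioi 0) ∧
    (ConvexOn ℝ (pexc tk '' Set.Ici 0)
        (fun π => pexc tν (Function.invFunOn (pexc tk) (Set.Ici 0) π)) ∧
      MonotoneOn (fun π => pexc tν (Function.invFunOn (pexc tk) (Set.Ici 0) π))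
        (pexc tk '' Set.Ici 0)) := by
  have htν : 0 < tν := htk.trans hlt
  have hsk := pexc_smono htk
  have hsν := pexc_smono htν
  have hcont : ContinuousOn (pexc tk) (Ici 0) :=
    fun μ _ => (hasDerivAt_pexc tk μ).continuousAt.continuousWithinAt
  have hconv : Convex ℝ (pexc tk '' Ici 0) :=
    (((convex_Ici (0:ℝ)).isPreconnected).image _ hcont).ordConnected.convex
  have hmem : ∀ p ∈ pexc tk '' Ici 0, Function.invFunOn (pexc tk) (Ici 0) p ∈ Ici 0 :=
    fun p hp => Function.invFunOn_mem hp
  have heq : ∀ p ∈ pexc tk '' Ici 0, pexc tk (Function.invFunOn (pexc tk) (Ici 0) p) = p :=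
    fun p hp => Function.invFunOn_eq hp
  have hord : ∀ p ∈ pexc tk '' Ici 0, ∀ q ∈ pexc tk '' Ici 0, p < q →
      Function.invFunOn (pexc tk) (Ici 0) p < Function.invFunOn (pexc tk) (Ici 0) q := by
    intro p hp q hq hpq
    by_contra hle
    push_neg at hle
    have := hsk.monotoneOn (hmem q hq) (hmem p hp) hle
    rw [heq p hp, heq q hq] at this
    exact absurd this (not_le.2 hpq)
  have mvt : ∀ a b : ℝ, 0 ≤ a → a < b → ∃ ξ ∈ Ioo a b,
      (pexc tk b - pexc tk a) * (gphi (tν - ξ) - gphi (tν + ξ))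
        = (pexc tν b - pexc tν a) * (gphi (tk - ξ) - gphi (tk + ξ)) := by
    intro a b _ hab
    exact exists_ratio_hasDerivAt_eq_ratio_slope (pexc tν)
      (fun μ => gphi (tν - μ) - gphi (tν + μ)) hab
      (fun μ _ => (hasDerivAt_pexc tν μ).continuousAt.continuousWithinAt)
      (fun μ _ => hasDerivAt_pexc tν μ) (pexc tk)
      (fun μ => gphi (tk - μ) - gphi (tk + μ))
      (fun μ _ => (hasDerivAt_pexc tk μ).continuousAt.continuousWithinAt)
      (fun μ _ => hasDerivAt_pexc tk μ)
  refine ⟨hsk.mono Ioi_subset_Ici_self, hsν.mono Ioi_subset_Ici_self, ?_, ?_⟩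
  · -- convexity
    apply convexOn_of_slope_mono_adjacent hconv
    intro x y z hx hz hxy hyz
    have hy : y ∈ pexc tk '' Ici 0 := hconv.ordConnected.out hx hz ⟨hxy.le, hyz.le⟩
    set μx := Function.invFunOn (pexc tk) (Ici 0) x with hμx
    set μy := Function.invFunOn (pexc tk) (Ici 0) y with hμy
    set μz := Function.invFunOn (pexc tk) (Ici 0) z with hμz
    have h0x : (0:ℝ) ≤ μx := hmem x hx
    have hxy' : μx < μy := hord x hx y hy hxy
    have hyz' : μy < μz := hord y hy z hz hyz
    obtain ⟨ξ₁, hξ₁, e₁⟩ := mvt μx μy h0x hxy'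
    obtain ⟨ξ₂, hξ₂, e₂⟩ := mvt μy μz (h0x.trans hxy'.le) hyz'
    rw [heq x hx, heq y hy] at e₁
    rw [heq y hy, heq z hz] at e₂
    have hξ₁0 : 0 < ξ₁ := lt_of_le_of_lt h0x hξ₁.1
    have hξ₂0 : 0 < ξ₂ := hξ₁0.trans (hξ₁.2.trans hξ₂.1)
    have hDk1 : 0 < gphi (tk - ξ₁) - gphi (tk + ξ₁) := D_pos htk hξ₁0
    have hDk2 : 0 < gphi (tk - ξ₂) - gphi (tk + ξ₂) := D_pos htk hξ₂0
    have cross := D_cross htk hlt hξ₁0 (hξ₁.2.trans hξ₂.1).le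
    have hyx : 0 < y - x := sub_pos.2 hxy
    have hzy : 0 < z - y := sub_pos.2 hyz
    show (pexc tν μy - pexc tν μx) / (y - x) ≤ (pexc tν μz - pexc tν μy) / (z - y)
    rw [div_le_div_iff₀ hyx hzy]
    have scaled : (pexc tν μy - pexc tν μx) * (z - y)
          * ((gphi (tk - ξ₁) - gphi (tk + ξ₁)) * (gphi (tk - ξ₂) - gphi (tk + ξ₂)))
        ≤ (pexc tν μz - pexc tν μy) * (y - x)
          * ((gphi (tk - ξ₁) - gphi (tk + ξ₁)) * (gphi (tk - ξ₂) - gphi (tk + ξ₂))) := by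
      calc (pexc tν μy - pexc tν μx) * (z - y)
            * ((gphi (tk - ξ₁) - gphi (tk + ξ₁)) * (gphi (tk - ξ₂) - gphi (tk + ξ₂)))
          = ((y - x) * (z - y)) * ((gphi (tν - ξ₁) - gphi (tν + ξ₁))
            * (gphi (tk - ξ₂) - gphi (tk + ξ₂))) := by
            linear_combination (-((z - y) * (gphi (tk - ξ₂) - gphi (tk + ξ₂)))) * e₁
        _ ≤ ((y - x) * (z - y)) * ((gphi (tν - ξ₂) - gphi (tν + ξ₂))
            * (gphi (tk - ξ₁) - gphi (tk + ξ₁))) :=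
            mul_le_mul_of_nonneg_left cross (by positivity)
        _ = (pexc tν μz - pexc tν μy) * (y - x)
            * ((gphi (tk - ξ₁) - gphi (tk + ξ₁)) * (gphi (tk - ξ₂) - gphi (tk + ξ₂))) := by
            linear_combination ((y - x) * (gphi (tk - ξ₁) - gphi (tk + ξ₁))) * e₂
    exact le_of_mul_le_mul_right scaled (mul_pos hDk1 hDk2)
  · -- monotone
    intro p hp q hq hpq
    rcases eq_or_lt_of_le hpq with rfl | h
    · exact le_refl _
    · exact hsν.monotoneOn (hmem p hp) (hmem q hq) (hord p hp q hq h).le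
end
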